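/- Let A and B be n-by-n weighted shift matrices (n ≥ 3) with weights a_1, …, a_n and b_1, …, b_n respectively, and suppose A is unitarily equivalent to B. If a_l·a_{l+1}·⋯·a_m ≠ 0 for some 1 ≤ l ≤ m ≤ n, then there exists a fixed k with 1 ≤ k ≤ n such that |a_j| = |b_{k+j}| for every j with l−1 ≤ j ≤ m+1, where all weight indices are taken cyclically modulo n. -/

import Mathlib

open Matrix

/-- The n-by-n weighted shift matrix with weights `a 0, …, a (n-1)`
(representing `a_1, …, a_n`): the `(i, i+1)` entry is `a i` (cyclically). -/
def wsMatrix {n : ℕ} (a : Fin n → ℂ) : Matrix (Fin n) (Fin n) ℂ :=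
  fun i j => if (j : ℕ) = ((i : ℕ) + 1) % n then a i else 0

/-- Two square complex matrices are unitarily equivalent if `B = U* A U`
for some unitary `U`. -/
def UnitarilyEquiv {n : ℕ} (A B : Matrix (Fin n) (Fin n) ℂ) : Prop :=
  ∃ U : Matrix (Fin n) (Fin n) ℂ, U ∈ Matrix.unitaryGroup (Fin n) ℂ ∧ B = Uᴴ * A * U

/-- Cyclic (1-indexed) access to the weights: `wcyc a j` is the weight `a_j`,
with `a_0 = a_n` and indices taken modulo `n`. -/
def wcyc {n : ℕ} [NeZero n] (a : Fin n → ℂ) (j : ℕ) : ℂ :=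
  a ⟨(j + n - 1) % n, Nat.mod_lt _ (Nat.pos_of_ne_zero (NeZero.ne n))⟩

open Fin.NatCast Fin.CommRing

section aux
variable {n : ℕ} [NeZero n]

lemma ws_apply (a : Fin n → ℂ) (i j : Fin n) :
    wsMatrix a i j = if j = i + 1 then a i else 0 := by
  unfold wsMatrix
  congr 1
  rw [eq_iff_iff, Fin.ext_iff, Fin.val_add, Fin.val_one']
  have h1 : ((i:ℕ) % n + 1 % n) % n = ((i:ℕ) + 1) % n := (Nat.add_mod _ _ _).symm
  rw [← h1, Nat.mod_eq_of_lt i.isLt]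

lemma ws_mul_ct (a : Fin n → ℂ) :
    wsMatrix a * (wsMatrix a)ᴴ = diagonal (fun i => a i * star (a i)) := by
  ext i j
  rw [mul_apply]
  simp only [conjTranspose_apply, ws_apply]
  rcases eq_or_ne i j with rfl | hij
  · simp [diagonal]
  · rw [diagonal_apply_ne _ hij]
    apply Finset.sum_eq_zero
    intro k _
    rcases eq_or_ne k (i + 1) with rfl | hk
    · rw [if_neg (fun hc => hij (add_right_cancel hc)), star_zero, mul_zero]
    · rw [if_neg hk, zero_mul]

lemma ct_mul_ws (a : Fin n → ℂ) :
    (wsMatrix a)ᴴ * wsMatrix a = diagonal (fun i => a (i - 1) * star (a (i - 1))) := by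
  ext i j
  rw [mul_apply]
  simp only [conjTranspose_apply, ws_apply]
  rcases eq_or_ne i j with rfl | hij
  · rw [diagonal_apply_eq]
    rw [Finset.sum_eq_single (i - 1)]
    · simp [sub_add_cancel, mul_comm]
    · intro k _ hk
      rw [if_neg, star_zero, zero_mul]
      intro hc; exact hk (by rw [hc]; ring)
    · simp
  · rw [diagonal_apply_ne _ hij]
    apply Finset.sum_eq_zero
    intro k _
    rcases eq_or_ne i (k + 1) with hik | hik
    · rw [if_neg (show ¬(j = k+1) from fun hc => hij (hik.trans hc.symm)), mul_zero]
    · rw [if_neg hik, star_zero, zero_mul]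

noncomputable def chainM (X : Matrix (Fin n) (Fin n) ℂ) (c : ℕ → Fin n → ℂ) : ℕ → Matrix (Fin n) (Fin n) ℂ :=
  fun r => r.rec 1 (fun s Ms => Ms * (diagonal (c s) * X))

lemma chain_apply (a : Fin n → ℂ) (c : ℕ → Fin n → ℂ) (r : ℕ) (i j : Fin n) :
    chainM (wsMatrix a) c r i j =
      if j = i + (r : Fin n) then
        ∏ t ∈ Finset.range r, (c t (i + (t : Fin n)) * a (i + (t : Fin n)))
      else 0 := by
  induction r generalizing j with
  | zero => simp [chainM, one_apply, eq_comm]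
  | succ s ih =>
    rw [show chainM (wsMatrix a) c (s+1) = chainM (wsMatrix a) c s * (diagonal (c s) * wsMatrix a) from rfl]
    rw [mul_apply]
    rw [Finset.sum_eq_single (i + (s : Fin n))]
    · rw [ih, if_pos rfl, diagonal_mul, ws_apply]
      have hc : ((s+1 : ℕ) : Fin n) = (s : Fin n) + 1 := by push_cast; ring
      rw [hc, ← add_assoc]
      rcases eq_or_ne j (i + (s : Fin n) + 1) with rfl | hj
      · rw [if_pos rfl, if_pos rfl, Finset.prod_range_succ]
      · rw [if_neg hj, if_neg hj, mul_zero, mul_zero]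
    · intro k _ hk
      rw [ih, if_neg hk, zero_mul]
    · simp

lemma trace_word (u v : Fin n → ℂ) (X : Matrix (Fin n) (Fin n) ℂ) :
    Matrix.trace (diagonal u * X * diagonal v * Xᴴ) =
      ∑ j, ∑ k, u j * X j k * v k * star (X j k) := by
  have hP : ∀ j k, (diagonal u * X * diagonal v) j k = u j * X j k * v k := by
    intro j k; rw [Matrix.mul_diagonal, Matrix.diagonal_mul]
  rw [Matrix.trace]
  refine Finset.sum_congr rfl fun j _ => ?_
  rw [Matrix.diag_apply, mul_apply]
  simp only [hP, conjTranspose_apply]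

lemma aeval_diagonal (d : Fin n → ℂ) (p : Polynomial ℂ) :
    Polynomial.aeval (diagonal d) p = diagonal (fun i => p.eval (d i)) := by
  have h1 : Polynomial.aeval ((Matrix.diagonalAlgHom (R := ℂ) (α := ℂ)) d) p
      = Matrix.diagonalAlgHom (R := ℂ) (α := ℂ) (Polynomial.aeval d p) :=
    Polynomial.aeval_algHom_apply _ _ _
  have h2 : ∀ i : Fin n, (Polynomial.aeval d p) i = p.eval (d i) := by
    intro i
    have h3 := Polynomial.aeval_algHom_apply (Pi.evalAlgHom ℂ (fun _ : Fin n => ℂ) i) d p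
    have h4 : (Pi.evalAlgHom ℂ (fun _ : Fin n => ℂ) i) ((Polynomial.aeval d) p) = (Polynomial.aeval d) p i := rfl
    have h5 : (Polynomial.aeval ((Pi.evalAlgHom ℂ (fun _ : Fin n => ℂ) i) d)) p = p.eval (d i) := by
      rw [show (Pi.evalAlgHom ℂ (fun _ : Fin n => ℂ) i) d = d i from rfl, ← Polynomial.coe_aeval_eq_eval]
    rw [← h4, ← h3, h5]
  exact h1.trans (congrArg _ (funext h2))

noncomputable def conjAH (U : Matrix (Fin n) (Fin n) ℂ) (h1 : Uᴴ * U = 1) :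
    Matrix (Fin n) (Fin n) ℂ →ₐ[ℂ] Matrix (Fin n) (Fin n) ℂ where
  toFun := fun X => Uᴴ * X * U
  map_one' := by show Uᴴ * 1 * U = 1; rw [mul_one, h1]
  map_mul' := fun X Y => by
    have h2 : U * Uᴴ = 1 := mul_eq_one_comm.mp h1
    have h3 : ∀ Z : Matrix (Fin n) (Fin n) ℂ, U * (Uᴴ * Z) = Z := fun Z => by
      rw [← Matrix.mul_assoc, h2, Matrix.one_mul]
    simp only [Matrix.mul_assoc, h3]
  map_zero' := by simp
  map_add' := fun X Y => by noncomm_ring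
  commutes' := fun r => by
    simp only [Algebra.algebraMap_eq_smul_one]
    rw [Matrix.mul_smul, mul_one, Matrix.smul_mul, h1]

lemma conjAH_apply (U : Matrix (Fin n) (Fin n) ℂ) (h1 : Uᴴ * U = 1)
    (X : Matrix (Fin n) (Fin n) ℂ) : conjAH U h1 X = Uᴴ * X * U := rfl

lemma conjAH_ct (U : Matrix (Fin n) (Fin n) ℂ) (h1 : Uᴴ * U = 1)
    (X : Matrix (Fin n) (Fin n) ℂ) : conjAH U h1 Xᴴ = (conjAH U h1 X)ᴴ := by
  simp only [conjAH_apply, conjTranspose_mul, conjTranspose_conjTranspose, Matrix.mul_assoc]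

lemma conjAH_trace (U : Matrix (Fin n) (Fin n) ℂ) (h1 : Uᴴ * U = 1)
    (X : Matrix (Fin n) (Fin n) ℂ) : Matrix.trace (conjAH U h1 X) = Matrix.trace X := by
  rw [conjAH_apply, Matrix.trace_mul_cycle, mul_eq_one_comm.mp h1, Matrix.one_mul]

lemma conjAH_diag_poly (U : Matrix (Fin n) (Fin n) ℂ) (h1 : Uᴴ * U = 1) (a b : Fin n → ℂ)
    (hB : wsMatrix b = Uᴴ * wsMatrix a * U) (p : Polynomial ℂ) :
    conjAH U h1 (diagonal (fun i => p.eval (a i * star (a i))))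
      = diagonal (fun i => p.eval (b i * star (b i))) := by
  rw [← aeval_diagonal, ← aeval_diagonal, ← ws_mul_ct a, ← ws_mul_ct b,
    ← Polynomial.aeval_algHom_apply (conjAH U h1)]
  congr 1
  rw [_root_.map_mul, conjAH_ct]
  congr 1 <;> rw [conjAH_apply, ← hB]

lemma conjAH_diag_poly' (U : Matrix (Fin n) (Fin n) ℂ) (h1 : Uᴴ * U = 1) (a b : Fin n → ℂ)
    (hB : wsMatrix b = Uᴴ * wsMatrix a * U) (p : Polynomial ℂ) :
    conjAH U h1 (diagonal (fun i => p.eval (a (i-1) * star (a (i-1)))))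
      = diagonal (fun i => p.eval (b (i-1) * star (b (i-1)))) := by
  rw [← aeval_diagonal, ← aeval_diagonal, ← ct_mul_ws a, ← ct_mul_ws b,
    ← Polynomial.aeval_algHom_apply (conjAH U h1)]
  congr 1
  rw [_root_.map_mul, conjAH_ct]
  congr 1 <;> rw [conjAH_apply, ← hB]

lemma conjAH_chain (U : Matrix (Fin n) (Fin n) ℂ) (h1 : Uᴴ * U = 1) (a b : Fin n → ℂ)
    (hB : wsMatrix b = Uᴴ * wsMatrix a * U) (c : ℕ → Polynomial ℂ) (r : ℕ) :
    conjAH U h1 (chainM (wsMatrix a) (fun t i => (c t).eval (a i * star (a i))) r)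
      = chainM (wsMatrix b) (fun t i => (c t).eval (b i * star (b i))) r := by
  induction r with
  | zero => exact map_one _
  | succ s ih =>
    show conjAH U h1 (chainM (wsMatrix a) _ s * (diagonal _ * wsMatrix a)) = _
    rw [_root_.map_mul, _root_.map_mul, ih, conjAH_diag_poly U h1 a b hB, conjAH_apply, ← hB]
    rfl

lemma master (U : Matrix (Fin n) (Fin n) ℂ) (h1 : Uᴴ * U = 1) (a b : Fin n → ℂ)
    (hB : wsMatrix b = Uᴴ * wsMatrix a * U) (p0 pr : Polynomial ℂ) (c : ℕ → Polynomial ℂ)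
    (r : ℕ) :
    (∑ j, ∑ k, p0.eval (a (j-1) * star (a (j-1)))
        * chainM (wsMatrix a) (fun t i => (c t).eval (a i * star (a i))) r j k
        * pr.eval (a k * star (a k))
        * star (chainM (wsMatrix a) (fun t i => (c t).eval (a i * star (a i))) r j k))
    = (∑ j, ∑ k, p0.eval (b (j-1) * star (b (j-1)))
        * chainM (wsMatrix b) (fun t i => (c t).eval (b i * star (b i))) r j k
        * pr.eval (b k * star (b k))
        * star (chainM (wsMatrix b) (fun t i => (c t).eval (b i * star (b i))) r j k)) := by
  rw [← trace_word, ← trace_word]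
  rw [← conjAH_trace U h1 (diagonal _ * chainM (wsMatrix a) _ r * diagonal _
    * (chainM (wsMatrix a) (fun t i => (c t).eval (a i * star (a i))) r)ᴴ)]
  congr 1
  rw [_root_.map_mul, _root_.map_mul, _root_.map_mul, conjAH_ct, conjAH_chain U h1 a b hB,
    conjAH_diag_poly' U h1 a b hB, conjAH_diag_poly U h1 a b hB]

lemma sum_ne_zero_of_dichotomy {ι : Type*} [Fintype ι] (f : ι → ℂ) (C : ℂ) (hC : C ≠ 0)
    (hd : ∀ i, f i = 0 ∨ f i = C) (i0 : ι) (h0 : f i0 = C) : (∑ i, f i) ≠ 0 := by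
  classical
  have hsum : ∑ i, f i = (Finset.univ.filter (fun i => f i ≠ 0)).card • C := by
    rw [← Finset.sum_filter_ne_zero]
    rw [Finset.sum_congr rfl (fun x hx => ?_), Finset.sum_const]
    rcases hd x with h | h
    · exact absurd h (Finset.mem_filter.mp hx).2
    · exact h
  rw [hsum]
  have hmem : i0 ∈ Finset.univ.filter (fun i => f i ≠ 0) := by
    simp [h0, hC]
  have hcard : (Finset.univ.filter (fun i => f i ≠ 0)).card ≠ 0 := by
    exact Finset.card_ne_zero_of_mem hmem
  simp only [nsmul_eq_mul]
  exact mul_ne_zero (Nat.cast_ne_zero.mpr hcard) hC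

lemma wcyc_eq (hn : 1 < n) (x : Fin n → ℂ) (j : ℕ) : wcyc x j = x ((j : Fin n) - 1) := by
  unfold wcyc
  congr 1
  rw [Fin.ext_iff, Fin.sub_def]
  simp only [Fin.val_natCast, Fin.val_one']
  rw [Nat.mod_eq_of_lt (show 1 < n from hn)]
  have h2 : (n - 1 + j % n) % n = ((n-1) % n + j % n) % n := by
    rw [Nat.mod_eq_of_lt (show n - 1 < n by omega)]
  rw [h2, ← Nat.add_mod]
  congr 1
  omega

lemma term_analysis (x : Fin n → ℂ) (S : Finset ℂ)
    (hmem : ∀ i : Fin n, x i * star (x i) ∈ S) (v : ℕ → ℂ) (ind : ℂ → Polynomial ℂ)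
    (hind : ∀ w, ∀ y ∈ S, Polynomial.eval y (ind w) = if y = w then 1 else 0)
    (r : ℕ) (j k : Fin n) :
    ((Polynomial.eval (x (j-1) * star (x (j-1))) (ind (v 0))
        * chainM (wsMatrix x) (fun t i => Polynomial.eval (x i * star (x i)) (ind (v (t+1)))) r j k
        * Polynomial.eval (x k * star (x k)) (ind (v (r+1)))
        * star (chainM (wsMatrix x) (fun t i => Polynomial.eval (x i * star (x i)) (ind (v (t+1)))) r j k) ≠ 0)
      → (k = j + (r : Fin n) ∧ x (j-1) * star (x (j-1)) = v 0
          ∧ (∀ t, t < r → x (j + (t : Fin n)) * star (x (j + (t : Fin n))) = v (t+1))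
          ∧ x (j + (r : Fin n)) * star (x (j + (r : Fin n))) = v (r+1)))
    ∧ ((k = j + (r : Fin n) ∧ x (j-1) * star (x (j-1)) = v 0
          ∧ (∀ t, t < r → x (j + (t : Fin n)) * star (x (j + (t : Fin n))) = v (t+1))
          ∧ x (j + (r : Fin n)) * star (x (j + (r : Fin n))) = v (r+1))
      → (Polynomial.eval (x (j-1) * star (x (j-1))) (ind (v 0))
        * chainM (wsMatrix x) (fun t i => Polynomial.eval (x i * star (x i)) (ind (v (t+1)))) r j k
        * Polynomial.eval (x k * star (x k)) (ind (v (r+1)))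
        * star (chainM (wsMatrix x) (fun t i => Polynomial.eval (x i * star (x i)) (ind (v (t+1)))) r j k))
        = ∏ t ∈ Finset.range r, v (t+1)) := by
  constructor
  · intro hne
    have hk : k = j + (r : Fin n) := by
      by_contra hk
      exact hne (by rw [chain_apply, if_neg hk]; simp)
    subst hk
    rw [chain_apply, if_pos rfl] at hne
    refine ⟨rfl, ?_, ?_, ?_⟩
    · have h0 : Polynomial.eval (x (j-1) * star (x (j-1))) (ind (v 0)) ≠ 0 :=
        fun hz => hne (by rw [hz]; simp)
      rw [hind (v 0) _ (hmem (j-1))] at h0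
      by_contra hc
      rw [if_neg hc] at h0
      exact h0 rfl
    · intro t ht
      have hprod : (∏ t ∈ Finset.range r,
          (Polynomial.eval (x (j + (t : Fin n)) * star (x (j + (t : Fin n)))) (ind (v (t+1)))
            * x (j + (t : Fin n)))) ≠ 0 := fun hz => hne (by rw [hz]; simp)
      have hfac := Finset.prod_ne_zero_iff.mp hprod t (Finset.mem_range.mpr ht)
      have h0 : Polynomial.eval (x (j + (t : Fin n)) * star (x (j + (t : Fin n)))) (ind (v (t+1))) ≠ 0 :=
        fun hz => hfac (by rw [hz]; simp)
      rw [hind (v (t+1)) _ (hmem _)] at h0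
      by_contra hc
      rw [if_neg hc] at h0
      exact h0 rfl
    · have h0 : Polynomial.eval (x (j + (r : Fin n)) * star (x (j + (r : Fin n)))) (ind (v (r+1))) ≠ 0 :=
        fun hz => hne (by rw [hz]; simp)
      rw [hind (v (r+1)) _ (hmem _)] at h0
      by_contra hc
      rw [if_neg hc] at h0
      exact h0 rfl
  · rintro ⟨hk, h0, hmid, hr1⟩
    subst hk
    rw [chain_apply, if_pos rfl]
    rw [hind (v 0) _ (hmem (j-1)), if_pos h0, hind (v (r+1)) _ (hmem _), if_pos hr1]
    have hP : (∏ t ∈ Finset.range r,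
        (Polynomial.eval (x (j + (t : Fin n)) * star (x (j + (t : Fin n)))) (ind (v (t+1)))
          * x (j + (t : Fin n)))) = ∏ t ∈ Finset.range r, x (j + (t : Fin n)) :=
      Finset.prod_congr rfl fun t ht => by
        rw [hind (v (t+1)) _ (hmem _), if_pos (hmid t (Finset.mem_range.mp ht)), one_mul]
    rw [hP, one_mul, mul_one, star_prod, ← Finset.prod_mul_distrib]
    exact Finset.prod_congr rfl fun t ht => hmid t (Finset.mem_range.mp ht)

end aux

theorem stmt4 (n : ℕ) [NeZero n] (hn : 3 ≤ n) (a b : Fin n → ℂ)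
    (h : UnitarilyEquiv (wsMatrix a) (wsMatrix b))
    (l m : ℕ) (hl : 1 ≤ l) (hlm : l ≤ m) (hm : m ≤ n)
    (hprod : (∏ j ∈ Finset.Icc l m, wcyc a j) ≠ 0) :
    ∃ k : ℕ, 1 ≤ k ∧ k ≤ n ∧ ∀ j : ℕ, l - 1 ≤ j → j ≤ m + 1 →
      ‖wcyc a j‖ = ‖wcyc b (k + j)‖ := by
  classical
  obtain ⟨U, hU, hB⟩ := h
  have h1 : Uᴴ * U = 1 := by
    have h2 := Matrix.mem_unitaryGroup_iff'.mp hU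
    rwa [Matrix.star_eq_conjTranspose] at h2
  have hn1 : (1:ℕ) < n := by omega
  set r : ℕ := m - l + 1 with hrdef
  set S : Finset ℂ := Finset.image (fun i => a i * star (a i)) Finset.univ
      ∪ Finset.image (fun i => b i * star (b i)) Finset.univ with hS
  have hmemA : ∀ i : Fin n, a i * star (a i) ∈ S := fun i =>
    Finset.mem_union_left _ (Finset.mem_image_of_mem _ (Finset.mem_univ i))
  have hmemB : ∀ i : Fin n, b i * star (b i) ∈ S := fun i =>
    Finset.mem_union_right _ (Finset.mem_image_of_mem _ (Finset.mem_univ i))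
  set ind : ℂ → Polynomial ℂ :=
    fun w => Lagrange.interpolate S id (fun y => if y = w then 1 else 0) with hinddef
  have hind : ∀ w, ∀ y ∈ S, Polynomial.eval y (ind w) = if y = w then 1 else 0 := by
    intro w y hy
    have := Lagrange.eval_interpolate_at_node (fun y => if y = w then 1 else 0)
      (Set.injOn_id (S : Set ℂ)) hy
    simpa only [id_eq] using this
  set e0 : Fin n := ((l-1 : ℕ) : Fin n) - 1 with he0
  set v : ℕ → ℂ := fun s => a (e0 + (s:Fin n)) * star (a (e0 + (s:Fin n))) with hv
  set C : ℂ := ∏ t ∈ Finset.range r, v (t+1) with hCdef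
  have he0' : e0 = ((l : Fin n) - 1) - 1 := by
    rw [he0, Nat.cast_sub hl, Nat.cast_one]
  -- C ≠ 0
  have hwz : ∀ jj ∈ Finset.Icc l m, wcyc a jj ≠ 0 := Finset.prod_ne_zero_iff.mp hprod
  have hCne : C ≠ 0 := by
    rw [hCdef]
    apply Finset.prod_ne_zero_iff.mpr
    intro t ht
    have htr : t < r := Finset.mem_range.mp ht
    have hidx : e0 + ((t+1 : ℕ) : Fin n) = ((l + t : ℕ) : Fin n) - 1 := by
      rw [he0']; push_cast; ring
    have haz : a (e0 + ((t+1 : ℕ) : Fin n)) ≠ 0 := by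
      rw [hidx, ← wcyc_eq hn1 a (l+t)]
      exact hwz (l+t) (Finset.mem_Icc.mpr ⟨Nat.le_add_right _ _, by omega⟩)
    exact mul_ne_zero haz (star_ne_zero.mpr haz)
  -- the trace identity
  have key := master U h1 a b hB (ind (v 0)) (ind (v (r+1))) (fun t => ind (v (t+1))) r
  -- d-side: pattern holds at jstar
  set jstar : Fin n := (l : Fin n) - 1 with hjstar
  have hpat0 : jstar - 1 = e0 := by rw [hjstar, he0']
  have hpats : ∀ s : ℕ, jstar + (s : Fin n) = e0 + ((s+1 : ℕ) : Fin n) := by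
    intro s; rw [hjstar, he0']; push_cast; ring
  have hcondA : jstar + (r : Fin n) = jstar + (r : Fin n) ∧
      a (jstar-1) * star (a (jstar-1)) = v 0 ∧
      (∀ t, t < r → a (jstar + (t : Fin n)) * star (a (jstar + (t : Fin n))) = v (t+1)) ∧
      a (jstar + (r : Fin n)) * star (a (jstar + (r : Fin n))) = v (r+1) := by
    refine ⟨rfl, ?_, ?_, ?_⟩
    · rw [hpat0, hv]; norm_num
    · intro t _; rw [hpats t, hv]
    · rw [hpats r, hv]
  have hAeq := (term_analysis a S hmemA v ind hind r jstar (jstar + (r : Fin n))).2 hcondA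
  -- dichotomy for the a-side summands
  have hdich : ∀ p : Fin n × Fin n,
      (Polynomial.eval (a (p.1-1) * star (a (p.1-1))) (ind (v 0))
        * chainM (wsMatrix a) (fun t i => Polynomial.eval (a i * star (a i)) (ind (v (t+1)))) r p.1 p.2
        * Polynomial.eval (a p.2 * star (a p.2)) (ind (v (r+1)))
        * star (chainM (wsMatrix a) (fun t i => Polynomial.eval (a i * star (a i)) (ind (v (t+1)))) r p.1 p.2)) = 0
      ∨ (Polynomial.eval (a (p.1-1) * star (a (p.1-1))) (ind (v 0))
        * chainM (wsMatrix a) (fun t i => Polynomial.eval (a i * star (a i)) (ind (v (t+1)))) r p.1 p.2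
        * Polynomial.eval (a p.2 * star (a p.2)) (ind (v (r+1)))
        * star (chainM (wsMatrix a) (fun t i => Polynomial.eval (a i * star (a i)) (ind (v (t+1)))) r p.1 p.2)) = C := by
    intro p
    by_cases hp : (Polynomial.eval (a (p.1-1) * star (a (p.1-1))) (ind (v 0))
        * chainM (wsMatrix a) (fun t i => Polynomial.eval (a i * star (a i)) (ind (v (t+1)))) r p.1 p.2
        * Polynomial.eval (a p.2 * star (a p.2)) (ind (v (r+1)))
        * star (chainM (wsMatrix a) (fun t i => Polynomial.eval (a i * star (a i)) (ind (v (t+1)))) r p.1 p.2)) = 0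
    · exact Or.inl hp
    · right
      have hcond := (term_analysis a S hmemA v ind hind r p.1 p.2).1 hp
      exact (term_analysis a S hmemA v ind hind r p.1 p.2).2 hcond
  -- nonvanishing of the a-side sum
  have hpairne := sum_ne_zero_of_dichotomy
    (f := fun p : Fin n × Fin n =>
      Polynomial.eval (a (p.1-1) * star (a (p.1-1))) (ind (v 0))
        * chainM (wsMatrix a) (fun t i => Polynomial.eval (a i * star (a i)) (ind (v (t+1)))) r p.1 p.2
        * Polynomial.eval (a p.2 * star (a p.2)) (ind (v (r+1)))
        * star (chainM (wsMatrix a) (fun t i => Polynomial.eval (a i * star (a i)) (ind (v (t+1)))) r p.1 p.2))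
    C hCne hdich ⟨jstar, jstar + (r : Fin n)⟩ hAeq
  have hRne : (∑ j, ∑ k, Polynomial.eval (b (j-1) * star (b (j-1))) (ind (v 0))
        * chainM (wsMatrix b) (fun t i => Polynomial.eval (b i * star (b i)) (ind (v (t+1)))) r j k
        * Polynomial.eval (b k * star (b k)) (ind (v (r+1)))
        * star (chainM (wsMatrix b) (fun t i => Polynomial.eval (b i * star (b i)) (ind (v (t+1)))) r j k)) ≠ 0 := by
    rw [← key]
    intro hz
    apply hpairne
    rw [Fintype.sum_prod_type]
    exact hz
  obtain ⟨j0, -, hj0⟩ := Finset.exists_ne_zero_of_sum_ne_zero hRne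
  obtain ⟨k0, -, hk0⟩ := Finset.exists_ne_zero_of_sum_ne_zero hj0
  obtain ⟨hk0eq, hb0, hbmid, hbr⟩ := (term_analysis b S hmemB v ind hind r j0 k0).1 hk0
  -- pattern on the b side
  have hBpat : ∀ s' : ℕ, s' ≤ r + 1 →
      b (j0 - 1 + (s' : Fin n)) * star (b (j0 - 1 + (s' : Fin n))) = v s' := by
    intro s' hs'
    rcases Nat.eq_zero_or_pos s' with rfl | hpos
    · simpa using hb0
    · rcases eq_or_lt_of_le hs' with hse | hslt
      · subst hse
        have hidx : j0 - 1 + ((r + 1 : ℕ) : Fin n) = j0 + (r : Fin n) := by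
          push_cast; ring
        rw [hidx]; exact hbr
      · have ht : s' - 1 < r := by omega
        have hidx : j0 - 1 + ((s' : ℕ) : Fin n) = j0 + ((s' - 1 : ℕ) : Fin n) := by
          have : (s' : ℕ) = (s' - 1) + 1 := by omega
          rw [this]; push_cast; ring
        rw [hidx]
        have hres := hbmid (s'-1) ht
        rwa [show s' - 1 + 1 = s' from by omega] at hres
  -- construct k
  set c0 : Fin n := j0 - (l : Fin n) + 1 with hc0
  refine ⟨if c0.val = 0 then n else c0.val, ?_, ?_, ?_⟩
  · split
    · omega
    · next hne0 => exact Nat.pos_of_ne_zero hne0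
  · split
    · exact le_refl n
    · exact le_of_lt c0.isLt
  · intro j hj1 hj2
    have hkc : (((if c0.val = 0 then n else c0.val) : ℕ) : Fin n) = c0 := by
      split
      · next h0 =>
          have hc00 : c0 = 0 := Fin.ext (by simpa using h0)
          rw [Fin.natCast_self, hc00]
      · exact Fin.cast_val_eq_self c0
    rw [wcyc_eq hn1 a j, wcyc_eq hn1 b _]
    set s : ℕ := j - (l - 1) with hsdef
    have hsle : s ≤ r + 1 := by omega
    have hjs : j = (l-1) + s := by omega
    have hia : ((j:ℕ):Fin n) - 1 = e0 + (s : Fin n) := by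
      rw [hjs, he0]; push_cast; ring
    have hA : a (((j:ℕ):Fin n) - 1) * star (a (((j:ℕ):Fin n) - 1)) = v s := by
      rw [hia, hv]
    have hib : (((if c0.val = 0 then n else c0.val) + j : ℕ) : Fin n) - 1 = j0 - 1 + (s : Fin n) := by
      rw [Nat.cast_add, hkc, hc0, hjs]
      have hl1 : ((l - 1 : ℕ) : Fin n) = (l : Fin n) - 1 := by
        rw [Nat.cast_sub hl, Nat.cast_one]
      push_cast [hl1]
      ring
    have heq : a (((j:ℕ):Fin n) - 1) * star (a (((j:ℕ):Fin n) - 1))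
        = b ((((if c0.val = 0 then n else c0.val) + j : ℕ) : Fin n) - 1)
          * star (b ((((if c0.val = 0 then n else c0.val) + j : ℕ) : Fin n) - 1)) := by
      rw [hA, hib]
      exact (hBpat s hsle).symm
    rw [show ∀ z : ℂ, star z = (starRingEnd ℂ) z from fun _ => rfl,
      show ∀ z : ℂ, star z = (starRingEnd ℂ) z from fun _ => rfl,
      Complex.mul_conj, Complex.mul_conj] at heq
    have hnormSq := Complex.ofReal_inj.mp heq
    rw [← Complex.sq_norm, ← Complex.sq_norm] at hnormSq
    have hsq := congrArg Real.sqrt hnormSq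
    rwa [Real.sqrt_sq (norm_nonneg _), Real.sqrt_sq (norm_nonneg _)] at hsq
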